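/- Let $M \leq GL_2(\mathbb{Z})$ be the subgroup generated by the matrices $\alpha = \begin{pmatrix} -1 & 2 \\ 0 & 1 \end{pmatrix}$, $\beta = \begin{pmatrix} 1 & 0 \\ 2 & -1 \end{pmatrix}$, and $\kappa = \begin{pmatrix} 0 & 1 \\ 1 & 0 \end{pmatrix}$ (acting on column vectors $(u, v)^T$). Then the orbit of the vector $(1, 0)$ under $M$ is exactly the set $\{(u, v) \in \mathbb{Z}^2 : u - v = 1 \text{ or } u - v = -1\}$. In particular, $M$ is an infinite group. -/

import Mathlib

def Amat : Matrix (Fin 2) (Fin 2) ℤ := !![-1, 2; 0, 1]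
def Bmat : Matrix (Fin 2) (Fin 2) ℤ := !![1, 0; 2, -1]
def Kmat : Matrix (Fin 2) (Fin 2) ℤ := !![0, 1; 1, 0]

lemma Amat_sq : Amat * Amat = 1 := by decide
lemma Bmat_sq : Bmat * Bmat = 1 := by decide
lemma Kmat_sq : Kmat * Kmat = 1 := by decide

/-- `α` as an element of `GL₂(ℤ)` (it is an involution). -/
def αGL : GL (Fin 2) ℤ := ⟨Amat, Amat, Amat_sq, Amat_sq⟩
def βGL : GL (Fin 2) ℤ := ⟨Bmat, Bmat, Bmat_sq, Bmat_sq⟩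
def κGL : GL (Fin 2) ℤ := ⟨Kmat, Kmat, Kmat_sq, Kmat_sq⟩

open Matrix

lemma mulVec_two (M : Matrix (Fin 2) (Fin 2) ℤ) (v : Fin 2 → ℤ) :
    M.mulVec v = ![M 0 0 * v 0 + M 0 1 * v 1, M 1 0 * v 0 + M 1 1 * v 1] := by
  funext i
  fin_cases i <;>
    simp [Matrix.mulVec, dotProduct, Fin.sum_univ_succ]

/-- The difference `w 0 - w 1` is preserved up to sign by every element of the closure. -/
lemma diff_invariant (g : GL (Fin 2) ℤ)
    (hg : g ∈ Subgroup.closure ({αGL, βGL, κGL} : Set (GL (Fin 2) ℤ))) :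
    ∀ w : Fin 2 → ℤ,
      ((g : Matrix (Fin 2) (Fin 2) ℤ).mulVec w) 0 - ((g : Matrix (Fin 2) (Fin 2) ℤ).mulVec w) 1
        = w 0 - w 1 ∨
      ((g : Matrix (Fin 2) (Fin 2) ℤ).mulVec w) 0 - ((g : Matrix (Fin 2) (Fin 2) ℤ).mulVec w) 1
        = -(w 0 - w 1) := by
  induction hg using Subgroup.closure_induction with
  | mem x hx =>
      intro w
      rcases hx with h | h | h <;> subst h <;>
        · right
          rw [mulVec_two]
          simp [αGL, βGL, κGL, Amat, Bmat, Kmat]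
          try ring
  | one => intro w; simp
  | mul x y hx hy ihx ihy =>
      intro w
      have h : ((x * y : GL (Fin 2) ℤ) : Matrix (Fin 2) (Fin 2) ℤ).mulVec w
          = (x : Matrix (Fin 2) (Fin 2) ℤ).mulVec ((y : Matrix (Fin 2) (Fin 2) ℤ).mulVec w) := by
        rw [Matrix.mulVec_mulVec]; rfl
      rw [h]
      rcases ihx ((y : Matrix (Fin 2) (Fin 2) ℤ).mulVec w) with h1 | h1 <;>
        rcases ihy w with h2 | h2 <;> omega
  | inv x hx ihx =>
      intro w
      set w' := ((x⁻¹ : GL (Fin 2) ℤ) : Matrix (Fin 2) (Fin 2) ℤ).mulVec w with hw'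
      have h : (x : Matrix (Fin 2) (Fin 2) ℤ).mulVec w' = w := by
        rw [hw', Matrix.mulVec_mulVec]
        have : (x : Matrix (Fin 2) (Fin 2) ℤ) * ((x⁻¹ : GL (Fin 2) ℤ) : Matrix (Fin 2) (Fin 2) ℤ)
            = 1 := by
          rw [← Units.val_mul, mul_inv_cancel, Units.val_one]
        rw [this, Matrix.one_mulVec]
      rcases ihx w' with h1 | h1 <;> rw [h] at h1 <;> omega

/-- Every vector `(n+1, n)` is in the orbit of `(1,0)`. -/
lemma reach (n : ℤ) :
    ∃ g ∈ Subgroup.closure ({αGL, βGL, κGL} : Set (GL (Fin 2) ℤ)),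
      (g : Matrix (Fin 2) (Fin 2) ℤ).mulVec ![1, 0] = ![n + 1, n] := by
  have hαm : αGL ∈ Subgroup.closure ({αGL, βGL, κGL} : Set (GL (Fin 2) ℤ)) :=
    Subgroup.subset_closure (by simp)
  have hβm : βGL ∈ Subgroup.closure ({αGL, βGL, κGL} : Set (GL (Fin 2) ℤ)) :=
    Subgroup.subset_closure (by simp)
  have hκm : κGL ∈ Subgroup.closure ({αGL, βGL, κGL} : Set (GL (Fin 2) ℤ)) :=
    Subgroup.subset_closure (by simp)
  induction n using Int.induction_on with
  | zero => exact ⟨1, one_mem _, by simp [Matrix.one_mulVec]⟩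
  | succ k ih =>
      obtain ⟨g, hg, hgv⟩ := ih
      refine ⟨κGL * βGL * g, mul_mem (mul_mem hκm hβm) hg, ?_⟩
      have h : ((κGL * βGL * g : GL (Fin 2) ℤ) : Matrix (Fin 2) (Fin 2) ℤ).mulVec ![1, 0]
          = Kmat.mulVec (Bmat.mulVec ((g : Matrix (Fin 2) (Fin 2) ℤ).mulVec ![1, 0])) := by
        rw [Matrix.mulVec_mulVec, Matrix.mulVec_mulVec, Units.val_mul, Units.val_mul]; rfl
      rw [h, hgv, mulVec_two, mulVec_two]
      funext i; fin_cases i <;> simp [Bmat, Kmat] <;> ring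
  | pred k ih =>
      obtain ⟨g, hg, hgv⟩ := ih
      refine ⟨κGL * αGL * g, mul_mem (mul_mem hκm hαm) hg, ?_⟩
      have h : ((κGL * αGL * g : GL (Fin 2) ℤ) : Matrix (Fin 2) (Fin 2) ℤ).mulVec ![1, 0]
          = Kmat.mulVec (Amat.mulVec ((g : Matrix (Fin 2) (Fin 2) ℤ).mulVec ![1, 0])) := by
        rw [Matrix.mulVec_mulVec, Matrix.mulVec_mulVec, Units.val_mul, Units.val_mul]; rfl
      rw [h, hgv, mulVec_two, mulVec_two]
      funext i; fin_cases i <;> simp [Amat, Kmat] <;> ring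

/-- The orbit of `(1,0)` under the subgroup `M ≤ GL₂(ℤ)` generated
by `α, β, κ` is exactly `{(u,v) ∈ ℤ² : u - v = ±1}`; in particular `M` is infinite. -/
theorem monodromy_orbit :
    {w : Fin 2 → ℤ | ∃ g ∈ Subgroup.closure ({αGL, βGL, κGL} : Set (GL (Fin 2) ℤ)),
        (g : Matrix (Fin 2) (Fin 2) ℤ).mulVec ![1, 0] = w} =
      {w : Fin 2 → ℤ | w 0 - w 1 = 1 ∨ w 0 - w 1 = -1} ∧
    Infinite (Subgroup.closure ({αGL, βGL, κGL} : Set (GL (Fin 2) ℤ))) := by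
  have hκm : κGL ∈ Subgroup.closure ({αGL, βGL, κGL} : Set (GL (Fin 2) ℤ)) :=
    Subgroup.subset_closure (by simp)
  constructor
  · ext w
    simp only [Set.mem_setOf_eq]
    constructor
    · rintro ⟨g, hg, rfl⟩
      have := diff_invariant g hg ![1, 0]
      simpa using this
    · intro hw
      have hweq : w = ![w 0, w 1] := by
        funext i; fin_cases i <;> rfl
      rcases hw with h | h
      · obtain ⟨g, hg, hgv⟩ := reach (w 1)
        refine ⟨g, hg, ?_⟩
        rw [hgv, hweq]
        funext i; fin_cases i <;> simp <;> omega
      · obtain ⟨g, hg, hgv⟩ := reach (w 0)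
        refine ⟨κGL * g, mul_mem hκm hg, ?_⟩
        have hcomp : ((κGL * g : GL (Fin 2) ℤ) : Matrix (Fin 2) (Fin 2) ℤ).mulVec ![1, 0]
            = Kmat.mulVec ((g : Matrix (Fin 2) (Fin 2) ℤ).mulVec ![1, 0]) := by
          rw [Matrix.mulVec_mulVec, Units.val_mul]; rfl
        rw [hcomp, hgv, mulVec_two, hweq]
        funext i; fin_cases i <;> simp [Kmat] <;> omega
  · -- Infinite: inject ℤ into the subgroup via `reach`.
    set M := Subgroup.closure ({αGL, βGL, κGL} : Set (GL (Fin 2) ℤ))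
    choose f hfmem hfval using reach
    have : Function.Injective (fun n : ℤ => (⟨f n, hfmem n⟩ : M)) := by
      intro m n hmn
      have : (f m : GL (Fin 2) ℤ) = f n := by simpa using hmn
      have h2 : (![m + 1, m] : Fin 2 → ℤ) = ![n + 1, n] := by
        rw [← hfval m, ← hfval n, this]
      have := congrFun h2 1
      simpa using this
    exact Infinite.of_injective _ this
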